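/- If N is prime, then any minor of the N×N discrete Fourier transform matrix is nonzero; i.e., for any subsets T, Ω of ZMod N with |T| = |Ω|, the submatrix (e^{-2πiωt/N})_{ω∈Ω, t∈T} is invertible. -/

import Mathlib

namespace ChebotarevAux

open Finset Matrix

local notation "MX" => MvPolynomial.X

noncomputable def killHom (n : ℕ) (i j : Fin n) :
    MvPolynomial (Fin n) ℤ →+* MvPolynomial (Fin n) ℤ :=
  (MvPolynomial.aeval (fun k => if k = j then MX i else MX k)).toRingHom

lemma killHom_X (n : ℕ) (i j k : Fin n) :
    killHom n i j (MX k) = if k = j then MX i else MX k := by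
  simp [killHom]

lemma killHom_C (n : ℕ) (i j : Fin n) (a : ℤ) :
    killHom n i j (MvPolynomial.C a) = MvPolynomial.C a := by
  simp [killHom]

lemma sub_dvd_sub_kill (n : ℕ) (i j : Fin n) (g : MvPolynomial (Fin n) ℤ) :
    (MX j - MX i) ∣ (g - killHom n i j g) := by
  induction g using MvPolynomial.induction_on with
  | C a => simp [killHom_C]
  | add g h hg hh =>
      have : g + h - killHom n i j (g + h) = (g - killHom n i j g) + (h - killHom n i j h) := by
        rw [map_add]; ring
      rw [this]; exact dvd_add hg hh
  | mul_X g k hg =>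
      have : g * MX k - killHom n i j (g * MX k)
          = (g - killHom n i j g) * MX k + killHom n i j g * (MX k - killHom n i j (MX k)) := by
        rw [_root_.map_mul]; ring
      rw [this]
      refine dvd_add (Dvd.dvd.mul_right hg _) (Dvd.dvd.mul_left ?_ _)
      rw [killHom_X]
      by_cases h : k = j
      · subst h; simp
      · simp [h]

lemma dvd_of_kill_eq_zero (n : ℕ) (i j : Fin n) (g : MvPolynomial (Fin n) ℤ)
    (h : killHom n i j g = 0) : (MX j - MX i) ∣ g := by
  have := sub_dvd_sub_kill n i j g
  rwa [h, sub_zero] at this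

lemma X_sub_ne_zero (n : ℕ) {i j : Fin n} (hij : i ≠ j) :
    (MX j - MX i : MvPolynomial (Fin n) ℤ) ≠ 0 := by
  intro h
  have := sub_eq_zero.mp h
  exact hij (MvPolynomial.X_injective this).symm

lemma prime_X_sub (n : ℕ) {i j : Fin n} (hij : i ≠ j) :
    Prime (MX j - MX i : MvPolynomial (Fin n) ℤ) := by
  rw [← Ideal.span_singleton_prime (X_sub_ne_zero n hij)]
  have hker : RingHom.ker (killHom n i j)
      = Ideal.span {(MX j - MX i : MvPolynomial (Fin n) ℤ)} := by
    apply le_antisymm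
    · intro g hg
      rw [Ideal.mem_span_singleton]
      exact dvd_of_kill_eq_zero n i j g hg
    · rw [Ideal.span_le]
      intro g hg
      simp only [Set.mem_singleton_iff] at hg
      subst hg
      have : killHom n i j (MX j - MX i) = 0 := by
        simp [killHom, hij.symm]
      exact this
  rw [← hker]
  exact RingHom.ker_isPrime _

lemma not_associated_X_sub (n : ℕ) {i₁ j₁ i₂ j₂ : Fin n} (h1 : i₁ < j₁) (h2 : i₂ < j₂)
    (hne : (i₁, j₁) ≠ (i₂, j₂)) :
    ¬ Associated (MX j₁ - MX i₁ : MvPolynomial (Fin n) ℤ) (MX j₂ - MX i₂) := by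
  have hk : ∃ k : Fin n, (k = i₂ ∨ k = j₂) ∧ k ≠ i₁ ∧ k ≠ j₁ := by
    by_cases hii : i₂ = i₁
    · by_cases hjj : j₂ = j₁
      · exact absurd (by simp [hii, hjj]) hne
      · exact ⟨j₂, Or.inr rfl, by rw [← hii]; exact h2.ne', hjj⟩
    · by_cases hij : i₂ = j₁
      · refine ⟨j₂, Or.inr rfl, ?_, ?_⟩
        · intro hc; have := h1.trans (hij ▸ h2); rw [hc] at this; exact lt_irrefl _ this
        · intro hc; exact h2.ne (hij.trans hc.symm)
      · exact ⟨i₂, Or.inl rfl, hii, hij⟩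
  obtain ⟨k, hk2, hki, hkj⟩ := hk
  intro hassoc
  have he := hassoc.map (MvPolynomial.eval (fun x => if x = k then (1:ℤ) else 0)).toMonoidHom
  simp only [RingHom.toMonoidHom_eq_coe, MonoidHom.coe_coe, map_sub,
    MvPolynomial.eval_X] at he
  rw [if_neg hkj.symm, if_neg hki.symm] at he
  have hz : Associated (0:ℤ) ((if j₂ = k then (1:ℤ) else 0) - if i₂ = k then 1 else 0) := by
    simpa using he
  have : ((if j₂ = k then (1:ℤ) else 0) - if i₂ = k then 1 else 0) = 0 :=
    (associated_zero_iff_eq_zero _).mp hz.symm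
  rcases hk2 with rfl | rfl
  · rw [if_neg (h2.ne' : j₂ ≠ k), if_pos rfl] at this; norm_num at this
  · rw [if_pos rfl, if_neg (h2.ne : i₂ ≠ k)] at this; norm_num at this

lemma prod_dvd_of_primes {R : Type*} [CommMonoidWithZero R] [IsCancelMulZero R] {ι : Type*}
    (s : Finset ι) (q : ι → R) (f : R)
    (hp : ∀ a ∈ s, Prime (q a))
    (hna : ∀ a ∈ s, ∀ b ∈ s, a ≠ b → ¬ Associated (q a) (q b))
    (hd : ∀ a ∈ s, q a ∣ f) : (∏ a ∈ s, q a) ∣ f := by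
  classical
  induction s using Finset.induction_on generalizing f with
  | empty => simp
  | @insert a s ha ih =>
      obtain ⟨g, rfl⟩ := hd a (mem_insert_self a s)
      rw [prod_insert ha]
      refine mul_dvd_mul_left _ (ih g (fun b hb => hp b (mem_insert_of_mem hb))
        (fun b hb c hc hbc => hna b (mem_insert_of_mem hb) c (mem_insert_of_mem hc) hbc)
        (fun b hb => ?_))
      have hbd := hd b (mem_insert_of_mem hb)
      have hbp := hp b (mem_insert_of_mem hb)
      rcases hbp.dvd_or_dvd hbd with h | h
      · exact absurd (hbp.associated_of_dvd (hp a (mem_insert_self a s)) h).symm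
          (hna a (mem_insert_self a s) b (mem_insert_of_mem hb) (fun hc => ha (hc ▸ hb)))
      · exact h

noncomputable def fdet (n : ℕ) (t : Fin n → ℕ) : MvPolynomial (Fin n) ℤ :=
  (Matrix.of fun a b : Fin n => (MX a : MvPolynomial (Fin n) ℤ) ^ (t b)).det

noncomputable def vpoly (n : ℕ) : MvPolynomial (Fin n) ℤ :=
  ∏ i : Fin n, ∏ j ∈ Ioi i, (MX j - MX i)

lemma kill_fdet (n : ℕ) (t : Fin n → ℕ) {i j : Fin n} (hij : i ≠ j) :
    killHom n i j (fdet n t) = 0 := by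
  rw [fdet, RingHom.map_det]
  apply Matrix.det_zero_of_row_eq hij
  funext b
  have h1 : killHom n i j (MX i) = MX i := by simp [killHom, hij]
  have h2 : killHom n i j (MX j) = MX i := by simp [killHom]
  show killHom n i j ((MX i)^(t b)) = killHom n i j ((MX j)^(t b))
  rw [map_pow, map_pow, h1, h2]

lemma vpoly_dvd_fdet (n : ℕ) (t : Fin n → ℕ) : vpoly n ∣ fdet n t := by
  rw [vpoly, Finset.prod_sigma']
  apply prod_dvd_of_primes
  · rintro ⟨i, j⟩ hm
    rw [mem_sigma, mem_Ioi] at hm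
    exact prime_X_sub n hm.2.ne
  · rintro ⟨i₁, j₁⟩ hm1 ⟨i₂, j₂⟩ hm2 hne
    rw [mem_sigma, mem_Ioi] at hm1 hm2
    refine not_associated_X_sub n hm1.2 hm2.2 (fun hc => hne ?_)
    simp only [Prod.mk.injEq] at hc
    obtain ⟨hc1, hc2⟩ := hc
    subst hc1; subst hc2; rfl
  · rintro ⟨i, j⟩ hm
    rw [mem_sigma, mem_Ioi] at hm
    exact dvd_of_kill_eq_zero n i j _ (kill_fdet n t hm.2.ne)

noncomputable def subHom (n : ℕ) (u : Fin n → ℕ) :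
    MvPolynomial (Fin n) ℤ →+* Polynomial ℤ :=
  (MvPolynomial.aeval (fun i => (Polynomial.X : Polynomial ℤ) ^ u i)).toRingHom

lemma subHom_fdet (n : ℕ) (t u : Fin n → ℕ) :
    subHom n u (fdet n t)
      = (Matrix.of fun a b : Fin n => (Polynomial.X : Polynomial ℤ) ^ (u a * t b)).det := by
  rw [fdet, RingHom.map_det]
  congr 1
  funext a b
  simp [subHom, ← pow_mul]

lemma subHom_vpoly (n : ℕ) (u : Fin n → ℕ) :
    subHom n u (vpoly n)
      = ∏ i : Fin n, ∏ j ∈ Ioi i,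
          ((Polynomial.X : Polynomial ℤ) ^ u j - Polynomial.X ^ u i) := by
  rw [vpoly, map_prod]
  refine Finset.prod_congr rfl fun i _ => ?_
  rw [map_prod]
  refine Finset.prod_congr rfl fun j _ => ?_
  simp [subHom]

lemma det_pow_mul (n : ℕ) (w : Fin n → ℕ) :
    (Matrix.of fun a b : Fin n => (Polynomial.X : Polynomial ℤ) ^ ((a : ℕ) * w b)).det
      = ∏ i : Fin n, ∏ j ∈ Ioi i,
          ((Polynomial.X : Polynomial ℤ) ^ w j - Polynomial.X ^ w i) := by
  have : (Matrix.of fun a b : Fin n => (Polynomial.X : Polynomial ℤ) ^ ((a : ℕ) * w b))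
      = (Matrix.vandermonde (fun b => (Polynomial.X : Polynomial ℤ) ^ w b)).transpose := by
    funext a b
    simp only [Matrix.transpose_apply, Matrix.of_apply, Matrix.vandermonde_apply,
      ← pow_mul, mul_comm]
  rw [this, Matrix.det_transpose, Matrix.det_vandermonde]

noncomputable def geomP (a b : ℕ) : Polynomial ℤ :=
  Polynomial.X ^ a * ∑ k ∈ range (b - a), Polynomial.X ^ k

lemma geom_factor {a b : ℕ} (h : a ≤ b) :
    (Polynomial.X : Polynomial ℤ) ^ b - Polynomial.X ^ a
      = (Polynomial.X - 1) * geomP a b := by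
  rw [geomP, mul_comm (Polynomial.X - 1), mul_assoc, geom_sum_mul, mul_sub, mul_one,
    ← pow_add, Nat.add_sub_cancel' h]

lemma geomP_eval_one (a b : ℕ) : (geomP a b).eval 1 = ((b - a : ℕ) : ℤ) := by
  simp [geomP, Polynomial.eval_finset_sum]

lemma eval_one_subHom (n : ℕ) (u : Fin n → ℕ) (S : MvPolynomial (Fin n) ℤ) :
    (subHom n u S).eval 1 = MvPolynomial.eval (fun _ => (1:ℤ)) S := by
  have h : (Polynomial.evalRingHom (1:ℤ)).comp (subHom n u)
      = (MvPolynomial.eval (fun _ => (1:ℤ)) : MvPolynomial (Fin n) ℤ →+* ℤ) := by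
    apply MvPolynomial.ringHom_ext
    · intro a; simp [subHom]
    · intro i; simp [subHom]
  exact RingHom.congr_fun h S

lemma prod_pairs_factor (n : ℕ) (w : Fin n → ℕ) (hw : ∀ i j : Fin n, i < j → w i ≤ w j) :
    (∏ i : Fin n, ∏ j ∈ Ioi i, ((Polynomial.X : Polynomial ℤ) ^ w j - Polynomial.X ^ w i))
      = (∏ i : Fin n, ∏ _j ∈ Ioi i, (Polynomial.X - 1 : Polynomial ℤ))
        * ∏ i : Fin n, ∏ j ∈ Ioi i, geomP (w i) (w j) := by
  rw [← Finset.prod_mul_distrib]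
  refine Finset.prod_congr rfl fun i _ => ?_
  rw [← Finset.prod_mul_distrib]
  refine Finset.prod_congr rfl fun j hj => ?_
  exact geom_factor (hw i j (mem_Ioi.mp hj))

lemma cfac_ne_zero (n : ℕ) :
    (∏ i : Fin n, ∏ _j ∈ Ioi i, (Polynomial.X - 1 : Polynomial ℤ)) ≠ 0 := by
  apply Finset.prod_ne_zero_iff.mpr
  intro i _
  apply Finset.prod_ne_zero_iff.mpr
  intro j _
  have : (Polynomial.X - 1 : Polynomial ℤ) = Polynomial.X - Polynomial.C 1 := by simp
  rw [this]
  exact Polynomial.X_sub_C_ne_zero 1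

lemma key_not_dvd (n p : ℕ) (hp : p.Prime) (t : Fin n → ℕ) (ht : StrictMono t)
    (htlt : ∀ i, t i < p) (S : MvPolynomial (Fin n) ℤ)
    (hfac : (∏ i : Fin n, ∏ j ∈ Ioi i, ((Polynomial.X : Polynomial ℤ) ^ t j - Polynomial.X ^ t i))
      = (∏ i : Fin n, ∏ j ∈ Ioi i, ((Polynomial.X : Polynomial ℤ) ^ (j:ℕ) - Polynomial.X ^ (i:ℕ)))
        * subHom n (fun i => (i:ℕ)) S) :
    ¬ ((p:ℤ) ∣ MvPolynomial.eval (fun _ => (1:ℤ)) S) := by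
  intro hdvd
  rw [prod_pairs_factor n t (fun i j hij => (ht hij).le),
      prod_pairs_factor n (fun i => (i:ℕ)) (fun i j hij => (Fin.lt_iff_val_lt_val.mp hij).le),
      mul_assoc] at hfac
  have hcan := mul_left_cancel₀ (cfac_ne_zero n) hfac
  have heval := congrArg (Polynomial.eval (1:ℤ)) hcan
  rw [Polynomial.eval_mul, eval_one_subHom] at heval
  have hL : Polynomial.eval 1 (∏ i : Fin n, ∏ j ∈ Ioi i, geomP (t i) (t j))
      = ∏ i : Fin n, ∏ j ∈ Ioi i, ((t j - t i : ℕ) : ℤ) := by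
    rw [Polynomial.eval_prod]
    exact Finset.prod_congr rfl fun i _ => by
      rw [Polynomial.eval_prod]
      exact Finset.prod_congr rfl fun j _ => geomP_eval_one _ _
  rw [hL, Polynomial.eval_prod] at heval
  have hpz : Prime ((p:ℕ) : ℤ) := Nat.prime_iff_prime_int.mp hp
  have : ((p:ℕ):ℤ) ∣ ∏ i : Fin n, ∏ j ∈ Ioi i, ((t j - t i : ℕ) : ℤ) := by
    rw [heval]
    exact Dvd.dvd.mul_left hdvd _
  obtain ⟨i, _, hi⟩ := hpz.exists_mem_finset_dvd this
  obtain ⟨j, hj, hij⟩ := hpz.exists_mem_finset_dvd hi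
  rw [Int.natCast_dvd_natCast] at hij
  have h1 : 0 < t j - t i := Nat.sub_pos_of_lt (ht (mem_Ioi.mp hj))
  have h2 : t j - t i < p := lt_of_le_of_lt (Nat.sub_le _ _) (htlt j)
  exact absurd (Nat.le_of_dvd h1 hij) (not_le.mpr h2)

lemma cyclotomic_step (p : ℕ) (hp : p.Prime) (ζ : ℂ) (hζ : IsPrimitiveRoot ζ p)
    (q : Polynomial ℤ) (hq : Polynomial.aeval ζ q = 0) : (p:ℤ) ∣ q.eval 1 := by
  haveI : Fact p.Prime := ⟨hp⟩
  have hmin : minpoly ℚ ζ ∣ q.map (algebraMap ℤ ℚ) := by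
    apply minpoly.dvd
    rw [Polynomial.aeval_map_algebraMap]
    exact hq
  rw [← Polynomial.cyclotomic_eq_minpoly_rat hζ hp.pos] at hmin
  rw [← Polynomial.map_cyclotomic_int p ℚ] at hmin
  have hdvd : Polynomial.cyclotomic p ℤ ∣ q := by
    have : (algebraMap ℤ ℚ : ℤ →+* ℚ) = Int.castRingHom ℚ := rfl
    rw [this] at hmin
    exact (Polynomial.map_dvd_map (Int.castRingHom ℚ)
      (fun a b h => by simpa using h) (Polynomial.cyclotomic.monic p ℤ)).mp hmin
  obtain ⟨r, rfl⟩ := hdvd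
  rw [Polynomial.eval_mul, Polynomial.eval_one_cyclotomic_prime]
  exact Dvd.intro _ rfl

theorem det_zeta_ne_zero (n p : ℕ) (hp : p.Prime) (ζ : ℂ) (hζ : IsPrimitiveRoot ζ p)
    (t ω : Fin n → ℕ) (ht : StrictMono t) (htlt : ∀ i, t i < p)
    (hω : Function.Injective ω) (hωlt : ∀ i, ω i < p) :
    (Matrix.of fun a b : Fin n => ζ ^ (ω a * t b)).det ≠ 0 := by
  obtain ⟨S, hS⟩ := vpoly_dvd_fdet n t
  have hfac : (∏ i : Fin n, ∏ j ∈ Ioi i,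
        ((Polynomial.X : Polynomial ℤ) ^ t j - Polynomial.X ^ t i))
      = (∏ i : Fin n, ∏ j ∈ Ioi i,
          ((Polynomial.X : Polynomial ℤ) ^ (j:ℕ) - Polynomial.X ^ (i:ℕ)))
        * subHom n (fun i => (i:ℕ)) S := by
    have := congrArg (subHom n (fun i => (i:ℕ))) hS
    rw [_root_.map_mul, subHom_fdet, subHom_vpoly, det_pow_mul] at this
    exact this
  have hns := key_not_dvd n p hp t ht htlt S hfac
  have hω' := congrArg (subHom n ω) hS
  rw [_root_.map_mul, subHom_fdet, subHom_vpoly] at hω'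
  have hev := congrArg (Polynomial.aeval ζ : Polynomial ℤ →ₐ[ℤ] ℂ) hω'
  rw [_root_.map_mul] at hev
  have hdet : (Polynomial.aeval ζ : Polynomial ℤ →ₐ[ℤ] ℂ)
        ((Matrix.of fun a b : Fin n => (Polynomial.X : Polynomial ℤ) ^ (ω a * t b)).det)
      = (Matrix.of fun a b : Fin n => ζ ^ (ω a * t b)).det := by
    rw [AlgHom.map_det]
    congr 1
    funext a b
    simp
  have hprod : (Polynomial.aeval ζ : Polynomial ℤ →ₐ[ℤ] ℂ)
        (∏ i : Fin n, ∏ j ∈ Ioi i,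
          ((Polynomial.X : Polynomial ℤ) ^ ω j - Polynomial.X ^ ω i))
      = ∏ i : Fin n, ∏ j ∈ Ioi i, (ζ ^ ω j - ζ ^ ω i) := by
    rw [map_prod]
    refine Finset.prod_congr rfl fun i _ => ?_
    rw [map_prod]
    exact Finset.prod_congr rfl fun j _ => by simp
  rw [hdet, hprod] at hev
  rw [hev]
  apply mul_ne_zero
  · apply Finset.prod_ne_zero_iff.mpr
    intro i _
    apply Finset.prod_ne_zero_iff.mpr
    intro j hj
    refine sub_ne_zero.mpr (fun hc => ?_)
    exact absurd (hζ.pow_inj (hωlt j) (hωlt i) hc) (hω.ne (mem_Ioi.mp hj).ne')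
  · intro hc
    have := cyclotomic_step p hp ζ hζ (subHom n ω S) hc
    rw [eval_one_subHom] at this
    exact hns this

end ChebotarevAux

open ChebotarevAux Finset Matrix

open scoped Classical

/-- Chebotarev's theorem: for `N` prime, every square submatrix
`(e^{-2πiωt/N})_{ω ∈ Ω, t ∈ T}` (with `|T| = |Ω|`) of the DFT matrix is
invertible, stated as bijectivity of the associated linear map. -/
theorem stmt_4 (N : ℕ) (hN : N.Prime) [NeZero N] (T Ω : Finset (ZMod N))
    (hcard : T.card = Ω.card) :
    Function.Bijective
      (Matrix.mulVecLin
        (Matrix.of (fun (ω : Ω) (t : T) =>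
          Complex.exp (-(2 * Real.pi * Complex.I * ((ω : ZMod N).val : ℂ) *
            ((t : ZMod N).val : ℂ)) / N)))) := by
  set n := T.card with hn
  set T' : Finset ℕ := T.image ZMod.val with hT'
  have hT'card : T'.card = n := Finset.card_image_of_injective T (ZMod.val_injective N)
  let tIso := T'.orderIsoOfFin hT'card
  set t : Fin n → ℕ := fun i => (tIso i : ℕ) with htdef
  have ht : StrictMono t := fun i j hij => by
    exact_mod_cast tIso.strictMono hij
  have htmem : ∀ i, t i ∈ T' := fun i => (tIso i).2
  have htlt : ∀ i, t i < N := by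
    intro i
    obtain ⟨x, _, hx⟩ := Finset.mem_image.mp (htmem i)
    rw [← hx]
    exact ZMod.val_lt x
  let oE : Fin n ≃ ↥Ω := (finCongr (hn ▸ hcard)).trans Ω.equivFin.symm
  set ω : Fin n → ℕ := fun a => ((oE a : ZMod N)).val with hωdef
  have hωinj : Function.Injective ω :=
    fun a b hab => oE.injective (Subtype.coe_injective (ZMod.val_injective N hab))
  have hωlt : ∀ a, ω a < N := fun a => ZMod.val_lt _
  set ζ : ℂ := (Complex.exp (2 * Real.pi * Complex.I / N))⁻¹ with hζdef
  have hζ : IsPrimitiveRoot ζ N := (Complex.isPrimitiveRoot_exp N (NeZero.ne N)).inv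
  have hentry : ∀ m k : ℕ,
      Complex.exp (-(2 * Real.pi * Complex.I * (m : ℂ) * (k : ℂ)) / N) = ζ ^ (m * k) := by
    intro m k
    rw [hζdef, ← Complex.exp_neg, ← Complex.exp_nat_mul]
    congr 1
    push_cast
    ring
  set A : Matrix (Fin n) (Fin n) ℂ := Matrix.of fun a b : Fin n => ζ ^ (ω a * t b) with hAdef
  have hA : A.det ≠ 0 := det_zeta_ne_zero n N hN ζ hζ t ω ht htlt hωinj hωlt
  have hmemT : ∀ i, ((t i : ℕ) : ZMod N) ∈ T := by
    intro i
    obtain ⟨x, hxT, hx⟩ := Finset.mem_image.mp (htmem i)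
    rw [← hx, ZMod.natCast_zmod_val]
    exact hxT
  let e0 : Fin n → ↥T := fun i => ⟨((t i : ℕ) : ZMod N), hmemT i⟩
  have hval : ∀ i, ((e0 i : ZMod N)).val = t i := fun i => ZMod.val_cast_of_lt (htlt i)
  have he0inj : Function.Injective e0 := by
    intro a b hab
    apply ht.injective
    rw [← hval a, ← hval b, hab]
  have he0bij : Function.Bijective e0 := by
    rw [Fintype.bijective_iff_injective_and_card]
    exact ⟨he0inj, by simp [Fintype.card_coe, hn]⟩
  let eE : Fin n ≃ ↥T := Equiv.ofBijective e0 he0bij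
  have heE : ∀ i, ((eE i : ZMod N)).val = t i := hval
  have hM : (Matrix.of (fun (ωi : Ω) (ti : T) =>
        Complex.exp (-(2 * Real.pi * Complex.I * ((ωi : ZMod N).val : ℂ) *
          ((ti : ZMod N).val : ℂ)) / N)))
      = A.submatrix oE.symm eE.symm := by
    funext ωi ti
    have h1 : ω (oE.symm ωi) = ((ωi : ZMod N)).val := by
      rw [hωdef]; simp
    have h2 : t (eE.symm ti) = ((ti : ZMod N)).val := by
      rw [← heE (eE.symm ti), Equiv.apply_symm_apply]
    show Complex.exp _ = A (oE.symm ωi) (eE.symm ti)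
    rw [hAdef]
    show Complex.exp _ = ζ ^ (ω (oE.symm ωi) * t (eE.symm ti))
    rw [h1, h2, hentry]
  rw [hM]
  have hUdet : IsUnit A.det := isUnit_iff_ne_zero.mpr hA
  have hU : IsUnit A := (Matrix.isUnit_iff_isUnit_det A).mpr hUdet
  have hAbij : Function.Bijective A.mulVec := by
    constructor
    · exact Matrix.mulVec_injective_iff_isUnit.mpr hU
    · intro w
      refine ⟨A⁻¹.mulVec w, ?_⟩
      rw [Matrix.mulVec_mulVec, Matrix.mul_nonsing_inv _ hUdet, Matrix.one_mulVec]
  have hfun : ⇑(Matrix.mulVecLin (A.submatrix ⇑oE.symm ⇑eE.symm))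
      = (fun w : Fin n → ℂ => w ∘ ⇑oE.symm) ∘ A.mulVec ∘ (fun v : ↥T → ℂ => v ∘ ⇑eE) := by
    funext v
    show (A.submatrix ⇑oE.symm ⇑eE.symm).mulVec v = _
    rw [Matrix.submatrix_mulVec_equiv A v (⇑oE.symm) eE.symm]
    simp only [Function.comp]
    rfl
  rw [hfun]
  refine Function.Bijective.comp ?_ (Function.Bijective.comp hAbij ?_)
  · exact (Equiv.arrowCongr oE (Equiv.refl ℂ)).bijective
  · exact (Equiv.arrowCongr eE.symm (Equiv.refl ℂ)).bijective
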